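/- Let T be a locally finite rooted tree with root r, edges directed toward r, and disjoint sets B and R of leaves. Then either there exists a strong blue blockage or there exists a red blockage. -/

import Mathlib

open Classical

/-- A (possibly infinite) locally finite tree with all edges directed toward the
root: each non-root vertex `v` has a unique outgoing edge `v → parent v`,
encoded by its tail `v`. -/
structure RTree (V : Type*) where
  root : V
  parent : V → V
  parent_root : parent root = root
  reaches : ∀ v, ∃ n : ℕ, parent^[n] v = root
  locFin : ∀ v, {s | parent s = v ∧ s ≠ root}.Finite

namespace RTree

variable {V : Type*} (T : RTree V)

/-- The upward neighbours of `v`. -/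
def children (v : V) : Set V := {s | T.parent s = v ∧ s ≠ T.root}

/-- A leaf is a vertex with no incoming edges. -/
def IsLeaf (v : V) : Prop := T.children v = ∅

/-- `A(v, X)`: in-degree minus out-degree of `v` in the edge set `X`
(edges being encoded by their tails). -/
noncomputable def A (X : Set V) (v : V) : ℤ :=
  ((T.children v ∩ X).ncard : ℤ) - (if v ∈ X ∧ v ≠ T.root then 1 else 0)

/-- `A(v, X, Y) = A(v, X) - A(v, Y)`. -/
noncomputable def A2 (X Y : Set V) (v : V) : ℤ := T.A X v - T.A Y v

/-- `V(X)`: the vertices incident with an edge of `X`. -/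
def VX (X : Set V) : Set V := X ∪ T.parent '' X

/-- `ter X`: the vertices at which no edge of `X` starts. -/
def ter (X : Set V) : Set V := {v | v ∉ X ∨ v = T.root}

/-- An edge set is rayless if it contains no ray of `T`. -/
def Rayless (X : Set V) : Prop :=
  ¬ ∃ f : ℕ → V, (∀ n, f n ∈ X) ∧ ∀ n, T.parent (f (n + 1)) = f n

/-- A leafless forest: every vertex of `V(S)` has an incoming `S`-edge. -/
def Leafless (S : Set V) : Prop :=
  ∀ v ∈ T.VX S, ∃ s ∈ S, T.parent s = v

/-- The flow `b(X)` to `X` from the leaf set `B`: the union of the edge sets of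
those paths starting at a leaf in `B` all of whose interior vertices are not
incident with an edge from `X`. -/
def flow (B X : Set V) : Set V :=
  {e | e ≠ T.root ∧ ∃ b ∈ B, ∃ n : ℕ, T.parent^[n] b = e ∧
    ∀ k, 1 ≤ k → k ≤ n → T.parent^[k] b ∉ T.VX X}

end RTree

namespace RTree

variable {V : Type*} (T : RTree V)

/-- A red blockage (for blue leaves `B` and red leaves `R`): a rayless edge set
`X` with `V(X) ∩ B = ∅` such that `A(v, X, b(X)) ≥ 0` for every
`v ∈ (V(X) ∪ {r}) \ R`, where `b(X)` is the blue flow to `X`. -/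
def RedBlockage (B R X : Set V) : Prop :=
  T.root ∉ X ∧ T.Rayless X ∧ T.VX X ∩ B = ∅ ∧
    ∀ v ∈ (T.VX X ∪ {T.root}) \ R, 0 ≤ T.A2 X (T.flow B X) v

/-- A blue blockage: defined like a red blockage with the roles of `B` and `R`
swapped. -/
def BlueBlockage (B R X : Set V) : Prop :=
  T.root ∉ X ∧ T.Rayless X ∧ T.VX X ∩ R = ∅ ∧
    ∀ v ∈ (T.VX X ∪ {T.root}) \ B, 0 ≤ T.A2 X (T.flow R X) v

/-- A strong blue blockage: a blue blockage with `A(r, X, r(X)) ≥ 1`. -/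
def StrongBlueBlockage (B R X : Set V) : Prop :=
  T.BlueBlockage B R X ∧ 1 ≤ T.A2 X (T.flow R X) T.root

end RTree

-- ===== auxiliary development =====

namespace RTree

variable {V : Type*}

lemma children_finite (T : RTree V) (v : V) : (T.children v).Finite := T.locFin v

lemma mem_children {T : RTree V} {v c : V} :
    c ∈ T.children v ↔ T.parent c = v ∧ c ≠ T.root := Iff.rfl

noncomputable def dep (T : RTree V) (v : V) : ℕ := Nat.find (T.reaches v)

lemma dep_spec (T : RTree V) (v : V) : T.parent^[T.dep v] v = T.root :=
  Nat.find_spec (T.reaches v)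

lemma dep_parent_lt (T : RTree V) {v : V} (hv : v ≠ T.root) :
    T.dep (T.parent v) < T.dep v := by
  have h0 : T.dep v ≠ 0 := by
    intro h
    have h2 := T.dep_spec v
    rw [h] at h2
    exact hv h2
  obtain ⟨k, hk⟩ := Nat.exists_eq_succ_of_ne_zero h0
  have hsp : T.parent^[k] (T.parent v) = T.root := by
    have h2 := T.dep_spec v
    rw [hk, Function.iterate_succ_apply] at h2
    exact h2
  have : T.dep (T.parent v) ≤ k := Nat.find_le hsp
  omega

end RTree

inductive BStat | x | n | f
deriving DecidableEq

namespace RTree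

variable {V : Type*}

noncomputable def lab (T : RTree V) (selR : Set V) (selX selN : V → Set V)
    (W1 : Set V) (v : V) : BStat :=
  if v = T.root then BStat.n
  else
    let s : Set V :=
      if T.parent v = T.root then selR
      else
        match T.lab selR selX selN W1 (T.parent v) with
        | BStat.x => selX (T.parent v)
        | BStat.n => selN (T.parent v)
        | BStat.f => ∅
    if v ∈ s then BStat.x else if v ∈ W1 then BStat.n else BStat.f
termination_by T.dep v
decreasing_by exact T.dep_parent_lt (by assumption)

noncomputable def selOf (T : RTree V) (selR : Set V) (selX selN : V → Set V)
    (W1 : Set V) (p : V) : Set V :=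
  if p = T.root then selR
  else
    match T.lab selR selX selN W1 p with
    | BStat.x => selX p
    | BStat.n => selN p
    | BStat.f => ∅

lemma lab_eq (T : RTree V) (selR : Set V) (selX selN : V → Set V) (W1 : Set V)
    {v : V} (hv : v ≠ T.root) :
    T.lab selR selX selN W1 v =
      if v ∈ T.selOf selR selX selN W1 (T.parent v) then BStat.x
      else if v ∈ W1 then BStat.n else BStat.f := by
  rw [lab]
  simp only [hv, if_false, selOf]
  rfl

end RTree

namespace RTree

variable {V : Type*}

theorem construct (T : RTree V) (E F W1 W2 : Set V) (ρ : V → ℕ) (δ : ℕ)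
    (hE : ∀ e ∈ E, T.IsLeaf e) (hF : ∀ f ∈ F, T.IsLeaf f)
    (hW21 : W2 ⊆ W1)
    (h2 : ∀ v ∈ W2, v ∉ E ∧ (v ∈ F ∨ ∃ S, S ⊆ T.children v ∩ W2 ∧ (∀ c ∈ S, ρ c < ρ v) ∧
        S.ncard = (T.children v \ W1).ncard + 1))
    (h1 : ∀ v ∈ W1, v ∉ E ∧ (v ∈ F ∨ (T.children v \ W1).ncard ≤ (T.children v ∩ W2).ncard))
    (hroot : (T.children T.root \ W1).ncard + δ ≤ (T.children T.root ∩ W2).ncard) :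
    ∃ X : Set V, T.root ∉ X ∧ T.Rayless X ∧ T.VX X ∩ E = ∅ ∧
      (∀ v ∈ (T.VX X ∪ {T.root}) \ F, 0 ≤ T.A2 X (T.flow E X) v) ∧
      (δ : ℤ) ≤ T.A2 X (T.flow E X) T.root := by
  set m : V → ℕ := fun v => (T.children v \ W1).ncard with hm
  -- choice functions
  set selX : V → Set V := fun v =>
    if h : ∃ S, S ⊆ T.children v ∩ W2 ∧ (∀ c ∈ S, ρ c < ρ v) ∧ S.ncard = m v + 1
    then h.choose else ∅ with hselX
  set selN : V → Set V := fun v =>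
    if h : ∃ S, S ⊆ T.children v ∩ W2 ∧ S.ncard = m v
    then h.choose else ∅ with hselN
  set selR : Set V :=
    if h : ∃ S, S ⊆ T.children T.root ∩ W2 ∧ S.ncard = m T.root + δ
    then h.choose else ∅ with hselR
  have selX_sub : ∀ v, selX v ⊆ T.children v ∩ W2 := by
    intro v
    rw [hselX]; dsimp only
    split
    · next h => exact h.choose_spec.1
    · exact Set.empty_subset _
  have selX_rho : ∀ v c, c ∈ selX v → ρ c < ρ v := by
    intro v c hc
    rw [hselX] at hc; dsimp only at hc
    split at hc
    · next h => exact h.choose_spec.2.1 c hc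
    · exact absurd hc (Set.notMem_empty c)
  have selX_card : ∀ v, v ∈ W2 → v ∉ F → (selX v).ncard = m v + 1 := by
    intro v hv hvF
    obtain ⟨-, h⟩ := h2 v hv
    rcases h with h | h
    · exact absurd h hvF
    · have h' : ∃ S, S ⊆ T.children v ∩ W2 ∧ (∀ c ∈ S, ρ c < ρ v) ∧ S.ncard = m v + 1 := h
      rw [hselX]; dsimp only
      rw [dif_pos h']
      exact h'.choose_spec.2.2
  have selN_sub : ∀ v, selN v ⊆ T.children v ∩ W2 := by
    intro v
    rw [hselN]; dsimp only
    split
    · next h => exact h.choose_spec.1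
    · exact Set.empty_subset _
  have selN_card : ∀ v, v ∈ W1 → v ∉ F → (selN v).ncard = m v := by
    intro v hv hvF
    obtain ⟨-, h⟩ := h1 v hv
    rcases h with h | h
    · exact absurd h hvF
    · have hex : ∃ S, S ⊆ T.children v ∩ W2 ∧ S.ncard = m v := by
        obtain ⟨S, hS1, hS2⟩ := Set.exists_subset_card_eq h
        exact ⟨S, hS1, hS2⟩
      rw [hselN]; dsimp only
      rw [dif_pos hex]
      exact hex.choose_spec.2
  have selR_sub : selR ⊆ T.children T.root ∩ W2 := by
    rw [hselR]
    split
    · next h => exact h.choose_spec.1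
    · exact Set.empty_subset _
  have selR_card : selR.ncard = m T.root + δ := by
    have hex : ∃ S, S ⊆ T.children T.root ∩ W2 ∧ S.ncard = m T.root + δ := by
      obtain ⟨S, hS1, hS2⟩ := Set.exists_subset_card_eq hroot
      exact ⟨S, hS1, hS2⟩
    rw [hselR, dif_pos hex]
    exact hex.choose_spec.2
  -- labels
  set L : V → BStat := T.lab selR selX selN W1 with hL
  set SO : V → Set V := T.selOf selR selX selN W1 with hSO
  have SO_root : SO T.root = selR := by rw [hSO, selOf, if_pos rfl]
  have SO_ne : ∀ v, v ≠ T.root → SO v =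
      (match L v with
       | BStat.x => selX v
       | BStat.n => selN v
       | BStat.f => (∅ : Set V)) := by
    intro v hv
    rw [hSO, selOf, if_neg hv]
  have SO_sub : ∀ p, SO p ⊆ T.children p ∩ W2 := by
    intro p
    by_cases hp : p = T.root
    · subst hp; rw [SO_root]; exact selR_sub
    · rw [SO_ne p hp]
      cases hLp : L p
      · exact selX_sub p
      · exact selN_sub p
      · exact Set.empty_subset _
  have labe : ∀ v, v ≠ T.root → L v =
      if v ∈ SO (T.parent v) then BStat.x
      else if v ∈ W1 then BStat.n else BStat.f := by
    intro v hv
    rw [hL, lab_eq T selR selX selN W1 hv]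
  have f1 : ∀ v, v ≠ T.root → (L v = BStat.x ↔ v ∈ SO (T.parent v)) := by
    intro v hv
    rw [labe v hv]
    constructor
    · intro hx
      by_contra hmem
      rw [if_neg hmem] at hx
      split at hx
      · exact BStat.noConfusion hx
      · exact BStat.noConfusion hx
    · intro hmem
      rw [if_pos hmem]
  have f2 : ∀ v, v ≠ T.root → L v = BStat.n → v ∈ W1 := by
    intro v hv hn
    rw [labe v hv] at hn
    split at hn
    · exact BStat.noConfusion hn
    · split at hn
      · assumption
      · exact BStat.noConfusion hn
  have f4 : ∀ v, v ≠ T.root → L v = BStat.x → v ∈ W2 := by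
    intro v hv hx
    have := (f1 v hv).mp hx
    exact ((SO_sub (T.parent v)) this).2
  have f5 : ∀ c, c ≠ T.root → c ∈ W1 → (L c = BStat.x ∨ L c = BStat.n) := by
    intro c hc hcW
    rw [labe c hc]
    by_cases hmem : c ∈ SO (T.parent c)
    · left; rw [if_pos hmem]
    · right; rw [if_neg hmem, if_pos hcW]
  -- the blockage
  set X : Set V := {v | v ≠ T.root ∧ L v = BStat.x} with hX
  have chX : ∀ p, T.children p ∩ X = SO p := by
    intro p
    apply Set.eq_of_subset_of_subset
    · rintro c ⟨hcch, hcne, hcx⟩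
      have := (f1 c hcne).mp hcx
      rwa [hcch.1] at this
    · intro c hc
      have hcc := SO_sub p hc
      have hcch : c ∈ T.children p := hcc.1
      refine ⟨hcch, hcch.2, ?_⟩
      rw [f1 c hcch.2, hcch.1]
      exact hc
  have rootX : T.root ∉ X := by
    rw [hX]; intro h; exact h.1 rfl
  -- C1 : engaged edges carry no flow
  have C1 : ∀ (nn : ℕ) (e b : V), b ∈ E → T.parent^[nn] b = e →
      (∀ k, 1 ≤ k → k ≤ nn → T.parent^[k] b ∉ T.VX X) → e ≠ T.root →
      (L e = BStat.x ∨ L e = BStat.n) → False := by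
    intro nn
    induction nn with
    | zero =>
      intro e b hbE hpath _ heroot heng
      simp only [Function.iterate_zero_apply] at hpath
      rcases heng with hx | hn
      · exact (h2 e (f4 e heroot hx)).1 (hpath ▸ hbE)
      · exact (h1 e (f2 e heroot hn)).1 (hpath ▸ hbE)
    | succ nn ih =>
      intro e b hbE hpath hint heroot heng
      have heVX : e ∉ T.VX X := by
        have := hint (nn + 1) (Nat.le_add_left 1 nn) le_rfl
        rwa [hpath] at this
      rcases heng with hx | hn
      · exact heVX (Or.inl ⟨heroot, hx⟩)
      · -- e is n-labelled
        have heW1 : e ∈ W1 := f2 e heroot hn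
        have hSOe : SO e = ∅ := by
          by_contra hne
          obtain ⟨c0, hc0⟩ := Set.nonempty_iff_ne_empty.mpr hne
          have hc0' : c0 ∈ T.children e ∩ X := by rw [chX e]; exact hc0
          exact heVX (Or.inr ⟨c0, hc0'.2, hc0'.1.1⟩)
        have hwpar' : T.parent (T.parent^[nn] b) = e :=
          (Function.iterate_succ_apply' T.parent nn b).symm.trans hpath
        set w : V := T.parent^[nn] b with hw
        have hwpar : T.parent w = e := hwpar'
        have hwroot : w ≠ T.root := by
          intro h
          rw [h, T.parent_root] at hwpar
          exact heroot hwpar.symm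
        have hwch : w ∈ T.children e := ⟨hwpar, hwroot⟩
        by_cases heF : e ∈ F
        · have : T.children e = ∅ := hF e heF
          rw [this] at hwch
          exact hwch
        · have hcard : (selN e).ncard = m e := selN_card e heW1 heF
          have hSOe' : SO e = selN e := by rw [SO_ne e heroot, hn]
          have hme : m e = 0 := by
            rw [← hcard, ← hSOe', hSOe, Set.ncard_empty]
          have hdiff : T.children e \ W1 = ∅ := by
            have hfin : (T.children e \ W1).Finite := (T.children_finite e).diff
            exact (Set.ncard_eq_zero hfin).mp hme
          have hwW1 : w ∈ W1 := by
            by_contra hww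
            have : w ∈ T.children e \ W1 := ⟨hwch, hww⟩
            rw [hdiff] at this
            exact this
          have hweng := f5 w hwroot hwW1
          exact ih w b hbE rfl (fun k hk1 hk2 => hint k hk1 (le_trans hk2 (Nat.le_succ nn)))
            hwroot hweng
  have inflow : ∀ v, T.children v ∩ T.flow E X ⊆ T.children v \ W1 := by
    intro v c hc
    obtain ⟨hcch, hcfl⟩ := hc
    refine ⟨hcch, ?_⟩
    intro hcW1
    obtain ⟨hcroot, b, hbE, nn, hpath, hint⟩ := hcfl
    exact C1 nn c b hbE hpath hint hcroot (f5 c hcroot hcW1)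
  have hAX : ∀ v, T.A X v = ((SO v).ncard : ℤ) - (if v ∈ X ∧ v ≠ T.root then 1 else 0) := by
    intro v
    rw [A, chX v]
    congr 1
    by_cases h : v ∈ X ∧ v ≠ T.root
    · rw [if_pos h, if_pos h]
    · rw [if_neg h, if_neg h]
  have hAfl : ∀ v, T.A (T.flow E X) v ≤ (m v : ℤ) := by
    intro v
    rw [A]
    have h1' : (T.children v ∩ T.flow E X).ncard ≤ (T.children v \ W1).ncard :=
      Set.ncard_le_ncard (inflow v) ((T.children_finite v).diff)
    have h2' : (0:ℤ) ≤ (if v ∈ T.flow E X ∧ v ≠ T.root then 1 else 0) := by positivity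
    have : ((T.children v ∩ T.flow E X).ncard : ℤ) ≤ (m v : ℤ) := by
      rw [hm]; exact_mod_cast h1'
    omega
  -- condition at root
  have condRoot : (δ : ℤ) ≤ T.A2 X (T.flow E X) T.root := by
    rw [A2, hAX]
    have : ¬ (T.root ∈ X ∧ T.root ≠ T.root) := fun h => h.2 rfl
    rw [if_neg this, SO_root, selR_card]
    have := hAfl T.root
    push_cast
    omega
  refine ⟨X, rootX, ?_, ?_, ?_, condRoot⟩
  · -- rayless
    rintro ⟨g, hgX, hgpar⟩
    have hdec : ∀ k, ρ (g (k + 1)) < ρ (g k) := by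
      intro k
      have hk1 : g (k+1) ∈ X := hgX (k+1)
      have hk0 : g k ∈ X := hgX k
      have hmem : g (k+1) ∈ SO (g k) := by
        have := (f1 (g (k+1)) hk1.1).mp hk1.2
        rwa [hgpar k] at this
      have hSOgk : SO (g k) = selX (g k) := by
        rw [SO_ne (g k) hk0.1, hk0.2]
      rw [hSOgk] at hmem
      exact selX_rho (g k) (g (k+1)) hmem
    have hbound : ∀ k, ρ (g k) + k ≤ ρ (g 0) := by
      intro k
      induction k with
      | zero => omega
      | succ k ih => have := hdec k; omega
    have := hbound (ρ (g 0) + 1)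
    omega
  · -- VX ∩ E = ∅
    apply Set.eq_empty_iff_forall_notMem.mpr
    rintro v ⟨hvVX, hvE⟩
    rcases hvVX with hvX | ⟨c, hcX, hcpar⟩
    · exact (h2 v (f4 v hvX.1 hvX.2)).1 hvE
    · have hcSO : c ∈ SO (T.parent c) := (f1 c hcX.1).mp hcX.2
      rw [hcpar] at hcSO
      by_cases hv : v = T.root
      · subst hv
        have : c ∈ T.children T.root := (SO_sub T.root hcSO).1
        have hleaf : T.children T.root = ∅ := hE T.root hvE
        rw [hleaf] at this
        exact this
      · rcases hLv : L v with _ | _ | _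
        · exact (h2 v (f4 v hv hLv)).1 hvE
        · exact (h1 v (f2 v hv hLv)).1 hvE
        · rw [SO_ne v hv, hLv] at hcSO
          exact hcSO
  · -- the inequalities
    rintro v ⟨hvmem, hvF⟩
    by_cases hv : v = T.root
    · subst hv
      have := condRoot
      have hδ : (0:ℤ) ≤ (δ:ℤ) := by positivity
      omega
    · have hvVX : v ∈ T.VX X := by
        rcases hvmem with h | h
        · exact h
        · exact absurd h hv
      rw [A2, hAX]
      have hAflv := hAfl v
      rcases hvVX with hvX | ⟨c, hcX, hcpar⟩
      · -- v ∈ X : x-labelled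
        have hvW2 : v ∈ W2 := f4 v hv hvX.2
        have hSOv : SO v = selX v := by rw [SO_ne v hv, hvX.2]
        rw [hSOv, selX_card v hvW2 hvF, if_pos ⟨hvX, hv⟩]
        push_cast
        omega
      · -- v = parent of an X-edge
        have hcSO : c ∈ SO v := by
          have := (f1 c hcX.1).mp hcX.2
          rwa [hcpar] at this
        by_cases hvX : v ∈ X
        · have hvW2 : v ∈ W2 := f4 v hv hvX.2
          have hSOv : SO v = selX v := by rw [SO_ne v hv, hvX.2]
          rw [hSOv, selX_card v hvW2 hvF, if_pos ⟨hvX, hv⟩]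
          push_cast
          omega
        · have hLvn : L v = BStat.n := by
            rcases hLv : L v with _ | _ | _
            · exact absurd ⟨hv, hLv⟩ hvX
            · rfl
            · rw [SO_ne v hv, hLv] at hcSO
              exact absurd hcSO (Set.notMem_empty c)
          have hvW1 : v ∈ W1 := f2 v hv hLvn
          have hSOv : SO v = selN v := by rw [SO_ne v hv, hLvn]
          rw [hSOv, selN_card v hvW1 hvF, if_neg (fun h => hvX h.1)]
          push_cast
          omega

end RTree

namespace RTree

variable {V : Type*}

/-- The basic one-step operator. -/
def phi (T : RTree V) (B R : Set V) (d : ℕ) (S2 S1 : Set V) : Set V :=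
  {v | v ∉ B ∧ (v ∈ R ∨ (T.children v \ S1).ncard + d ≤ (T.children v ∩ S2).ncard)}

lemma mem_phi {T : RTree V} {B R : Set V} {d : ℕ} {S2 S1 : Set V} {v : V} :
    v ∈ phi T B R d S2 S1 ↔
      v ∉ B ∧ (v ∈ R ∨ (T.children v \ S1).ncard + d ≤ (T.children v ∩ S2).ncard) :=
  Iff.rfl

lemma ncard_inter_mono (T : RTree V) (v : V) {S S' : Set V} (h : S ⊆ S') :
    (T.children v ∩ S).ncard ≤ (T.children v ∩ S').ncard :=
  Set.ncard_le_ncard (Set.inter_subset_inter_right _ h) ((T.children_finite v).inter_of_left S')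

lemma ncard_diff_anti (T : RTree V) (v : V) {S S' : Set V} (h : S ⊆ S') :
    (T.children v \ S').ncard ≤ (T.children v \ S).ncard :=
  Set.ncard_le_ncard (Set.diff_subset_diff_right h) ((T.children_finite v).diff)

lemma phi_mono (T : RTree V) (B R : Set V) (d : ℕ) {S2 S2' S1 S1' : Set V}
    (h2 : S2 ⊆ S2') (h1 : S1 ⊆ S1') : phi T B R d S2 S1 ⊆ phi T B R d S2' S1' := by
  rintro v ⟨hvB, hv⟩
  refine ⟨hvB, ?_⟩
  rcases hv with hv | hv
  · exact Or.inl hv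
  · right
    have a := ncard_diff_anti T v h1
    have b := ncard_inter_mono T v h2
    omega

/-- The `P1`-operator for a fixed `P2`-candidate. -/
noncomputable def P1op (T : RTree V) (B R : Set V) (S2 : Set V) : Set V →o Set V :=
  ⟨fun S1 => phi T B R 0 S2 S1, fun _ _ h => phi_mono T B R 0 (subset_refl S2) h⟩

noncomputable def P1s (T : RTree V) (B R : Set V) (S2 : Set V) : Set V :=
  OrderHom.gfp (P1op T B R S2)

lemma P1s_mono (T : RTree V) (B R : Set V) {S2 S2' : Set V} (h : S2 ⊆ S2') :
    P1s T B R S2 ⊆ P1s T B R S2' := by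
  apply OrderHom.gfp.monotone
  intro S1
  exact phi_mono T B R 0 h (subset_refl S1)

noncomputable def P2op (T : RTree V) (B R : Set V) : Set V →o Set V :=
  ⟨fun S2 => phi T B R 1 S2 (P1s T B R S2),
   fun _ _ h => phi_mono T B R 1 h (P1s_mono T B R h)⟩

noncomputable def P2 (T : RTree V) (B R : Set V) : Set V :=
  OrderHom.lfp (P2op T B R)

noncomputable def P1 (T : RTree V) (B R : Set V) : Set V :=
  P1s T B R (P2 T B R)

lemma P2_eq (T : RTree V) (B R : Set V) :
    phi T B R 1 (P2 T B R) (P1 T B R) = P2 T B R :=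
  OrderHom.map_lfp (P2op T B R)

lemma P1_eq (T : RTree V) (B R : Set V) :
    phi T B R 0 (P2 T B R) (P1 T B R) = P1 T B R :=
  OrderHom.map_gfp (P1op T B R (P2 T B R))

lemma P2_sub_P1 (T : RTree V) (B R : Set V) : P2 T B R ⊆ P1 T B R := by
  have h : P2 T B R ∪ P1 T B R ≤ (P1op T B R (P2 T B R)) (P2 T B R ∪ P1 T B R) := by
    intro v hv
    rcases hv with hv | hv
    · rw [← P2_eq T B R] at hv
      obtain ⟨hvB, hv⟩ := hv
      refine ⟨hvB, ?_⟩
      rcases hv with hv | hv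
      · exact Or.inl hv
      · right
        have a := ncard_diff_anti T v (Set.subset_union_right (s := P2 T B R) (t := P1 T B R))
        omega
    · rw [← P1_eq T B R] at hv
      obtain ⟨hvB, hv⟩ := hv
      refine ⟨hvB, ?_⟩
      rcases hv with hv | hv
      · exact Or.inl hv
      · right
        have a := ncard_diff_anti T v (Set.subset_union_right (s := P2 T B R) (t := P1 T B R))
        omega
  have := (P1op T B R (P2 T B R)).le_gfp h
  exact fun v hv => this (Or.inl hv)

lemma R_sub_P2 (T : RTree V) (B R : Set V) (hBR : ∀ v ∈ R, v ∉ B) :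
    R ⊆ P2 T B R := by
  intro v hv
  rw [← P2_eq T B R]
  exact ⟨hBR v hv, Or.inl hv⟩

/-- finite stage approximations of `P2`. -/
noncomputable def derN (T : RTree V) (B R : Set V) : ℕ → Set V
  | 0 => ∅
  | n + 1 => phi T B R 1 (derN T B R n) (P1 T B R)

lemma derN_mono (T : RTree V) (B R : Set V) : ∀ {a b : ℕ}, a ≤ b →
    derN T B R a ⊆ derN T B R b := by
  have key : ∀ n, derN T B R n ⊆ derN T B R (n + 1) := by
    intro n
    induction n with
    | zero => exact Set.empty_subset _
    | succ n ih => exact phi_mono T B R 1 ih (subset_refl _)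
  intro a b hab
  induction b with
  | zero => rw [Nat.le_zero.mp hab]
  | succ b ih =>
    rcases Nat.lt_or_ge a (b+1) with h | h
    · exact (ih (Nat.lt_succ_iff.mp h)).trans (key b)
    · rw [Nat.le_antisymm hab h]

lemma derN_le (T : RTree V) (B R : Set V) : ∀ n, derN T B R n ⊆ P2 T B R := by
  intro n
  induction n with
  | zero => exact Set.empty_subset _
  | succ n ih =>
    calc derN T B R (n+1) = phi T B R 1 (derN T B R n) (P1 T B R) := rfl
    _ ⊆ phi T B R 1 (P2 T B R) (P1 T B R) := phi_mono T B R 1 ih (subset_refl _)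
    _ = P2 T B R := P2_eq T B R

lemma P2_sub_iUnion (T : RTree V) (B R : Set V) :
    P2 T B R ⊆ ⋃ n, derN T B R n := by
  set U := ⋃ n, derN T B R n with hU
  have hUP2 : U ⊆ P2 T B R := Set.iUnion_subset (derN_le T B R)
  have hpre : (P2op T B R) U ≤ U := by
    intro v hv
    obtain ⟨hvB, hv⟩ := hv
    rcases hv with hvR | hcond
    · have : v ∈ derN T B R 1 := ⟨hvB, Or.inl hvR⟩
      exact Set.mem_iUnion.mpr ⟨1, this⟩
    · -- find a uniform stage for the finitely many children in U
      have hfin : (T.children v ∩ U).Finite := (T.children_finite v).inter_of_left U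
      have hex : ∀ c ∈ T.children v ∩ U, ∃ n, c ∈ derN T B R n := by
        intro c hc
        exact Set.mem_iUnion.mp hc.2
      obtain ⟨N, hN⟩ : ∃ N, ∀ c ∈ T.children v ∩ U, c ∈ derN T B R N := by
        classical
        refine ⟨hfin.toFinset.sup (fun c => if h : ∃ n, c ∈ derN T B R n then Nat.find h else 0), ?_⟩
        intro c hc
        have hc' : c ∈ hfin.toFinset := hfin.mem_toFinset.mpr hc
        have hhc : ∃ n, c ∈ derN T B R n := hex c hc
        have h1 : c ∈ derN T B R (Nat.find hhc) := Nat.find_spec hhc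
        have h2 : Nat.find hhc ≤ hfin.toFinset.sup
            (fun c => if h : ∃ n, c ∈ derN T B R n then Nat.find h else 0) := by
          have := Finset.le_sup (f := fun c => if h : ∃ n, c ∈ derN T B R n then Nat.find h else 0) hc'
          rwa [dif_pos hhc] at this
        exact derN_mono T B R h2 h1
      have hsub : T.children v ∩ U ⊆ T.children v ∩ derN T B R N := by
        intro c hc
        exact ⟨hc.1, hN c hc⟩
      have hcard : (T.children v ∩ U).ncard ≤ (T.children v ∩ derN T B R N).ncard :=
        Set.ncard_le_ncard hsub ((T.children_finite v).inter_of_left _)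
      have hP1 : P1s T B R U ⊆ P1 T B R := P1s_mono T B R hUP2
      have hdiff := ncard_diff_anti T v hP1
      have : v ∈ derN T B R (N + 1) := by
        refine ⟨hvB, Or.inr ?_⟩
        omega
      exact Set.mem_iUnion.mpr ⟨N + 1, this⟩
  have := OrderHom.lfp_le (f := P2op T B R) hpre
  exact this

/-- rank function for `P2`. -/
noncomputable def rho2 (T : RTree V) (B R : Set V) (v : V) : ℕ :=
  if h : ∃ n, v ∈ derN T B R n then Nat.find h else 0

lemma H2red (T : RTree V) (B R : Set V) :
    ∀ v ∈ P2 T B R, v ∉ B ∧ (v ∈ R ∨ ∃ S, S ⊆ T.children v ∩ P2 T B R ∧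
      (∀ c ∈ S, rho2 T B R c < rho2 T B R v) ∧
      S.ncard = (T.children v \ P1 T B R).ncard + 1) := by
  intro v hv
  have hvB : v ∉ B := by
    rw [← P2_eq T B R] at hv
    exact hv.1
  refine ⟨hvB, ?_⟩
  have hex : ∃ n, v ∈ derN T B R n := Set.mem_iUnion.mp (P2_sub_iUnion T B R hv)
  have hrv : rho2 T B R v = Nat.find hex := by rw [rho2, dif_pos hex]
  have hspec : v ∈ derN T B R (Nat.find hex) := Nat.find_spec hex
  rcases hk : Nat.find hex with _ | k
  · rw [hk] at hspec
    exact absurd hspec (Set.notMem_empty v)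
  · rw [hk] at hspec
    obtain ⟨-, hcond⟩ := hspec
    rcases hcond with hvR | hcond
    · exact Or.inl hvR
    · right
      have hsub0 : T.children v ∩ derN T B R k ⊆ T.children v ∩ P2 T B R :=
        Set.inter_subset_inter_right _ (derN_le T B R k)
      obtain ⟨S, hS1, hS2⟩ := Set.exists_subset_card_eq hcond
      refine ⟨S, hS1.trans hsub0, ?_, hS2⟩
      intro c hc
      have hc' : c ∈ derN T B R k := (hS1 hc).2
      have hcex : ∃ n, c ∈ derN T B R n := ⟨k, hc'⟩
      have : Nat.find hcex ≤ k := Nat.find_le hc'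
      rw [rho2, dif_pos hcex, hrv, hk]
      omega

lemma H1red (T : RTree V) (B R : Set V) :
    ∀ v ∈ P1 T B R, v ∉ B ∧ (v ∈ R ∨
      (T.children v \ P1 T B R).ncard ≤ (T.children v ∩ P2 T B R).ncard) := by
  intro v hv
  rw [← P1_eq T B R] at hv
  obtain ⟨hvB, hv⟩ := hv
  refine ⟨hvB, ?_⟩
  rcases hv with hv | hv
  · exact Or.inl hv
  · right; omega

end RTree

namespace RTree

variable {V : Type*}

lemma uniform_stage (T : RTree V) (D : ℕ → Set V)
    (hmono : ∀ a b : ℕ, a ≤ b → D a ⊆ D b) (v : V) :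
    ∃ N, T.children v ∩ (⋃ n, D n) ⊆ D N := by
  classical
  have hfin : (T.children v ∩ ⋃ n, D n).Finite := (T.children_finite v).inter_of_left _
  refine ⟨hfin.toFinset.sup (fun c => if h : ∃ n, c ∈ D n then Nat.find h else 0), ?_⟩
  intro c hc
  have hc' : c ∈ hfin.toFinset := hfin.mem_toFinset.mpr hc
  have hhc : ∃ n, c ∈ D n := Set.mem_iUnion.mp hc.2
  have h1 : c ∈ D (Nat.find hhc) := Nat.find_spec hhc
  have h2 := Finset.le_sup (f := fun c => if h : ∃ n, c ∈ D n then Nat.find h else 0) hc'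
  rw [dif_pos hhc] at h2
  exact hmono _ _ h2 h1

/-- finite stage approximations of the complement of `P1`. -/
noncomputable def qderN (T : RTree V) (B R : Set V) : ℕ → Set V
  | 0 => ∅
  | n + 1 => phi T R B 1 (qderN T B R n) (P2 T B R)ᶜ

lemma qderN_mono (T : RTree V) (B R : Set V) : ∀ {a b : ℕ}, a ≤ b →
    qderN T B R a ⊆ qderN T B R b := by
  have key : ∀ n, qderN T B R n ⊆ qderN T B R (n + 1) := by
    intro n
    induction n with
    | zero => exact Set.empty_subset _
    | succ n ih => exact phi_mono T R B 1 ih (subset_refl _)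
  intro a b hab
  induction b with
  | zero => rw [Nat.le_zero.mp hab]
  | succ b ih =>
    rcases Nat.lt_or_ge a (b+1) with h | h
    · exact (ih (Nat.lt_succ_iff.mp h)).trans (key b)
    · rw [Nat.le_antisymm hab h]

lemma qderN_le (T : RTree V) (B R : Set V) : ∀ n, qderN T B R n ⊆ (P1 T B R)ᶜ := by
  intro n
  induction n with
  | zero => exact Set.empty_subset _
  | succ n ih =>
    rintro v ⟨hvR, hv⟩
    intro hvP1
    have hP1 : v ∈ phi T B R 0 (P2 T B R) (P1 T B R) := by
      rw [P1_eq]; exact hvP1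
    obtain ⟨hvB, hcond1⟩ := hP1
    rcases hcond1 with h | hcond1
    · exact hvR h
    rcases hv with h | hcond2
    · exact hvB h
    have e1 : T.children v \ (P2 T B R)ᶜ = T.children v ∩ P2 T B R := Set.diff_compl
    have e2 : T.children v ∩ (P1 T B R)ᶜ = T.children v \ P1 T B R := (Set.diff_eq _ _).symm
    rw [e1] at hcond2
    have hsub : T.children v ∩ qderN T B R n ⊆ T.children v \ P1 T B R := by
      intro c hc
      rw [← e2]
      exact ⟨hc.1, ih hc.2⟩
    have hcard : (T.children v ∩ qderN T B R n).ncard ≤ (T.children v \ P1 T B R).ncard :=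
      Set.ncard_le_ncard hsub ((T.children_finite v).diff)
    omega

lemma NP1_sub_iUnion (T : RTree V) (B R : Set V) (hRB : ∀ v ∈ R, v ∉ B) :
    (P1 T B R)ᶜ ⊆ ⋃ n, qderN T B R n := by
  set C := (⋃ n, qderN T B R n)ᶜ with hC
  have hpre : C ≤ (P1op T B R (P2 T B R)) C := by
    intro v hv
    have hnot : ∀ n, v ∉ qderN T B R n := by
      intro n hn
      exact hv (Set.mem_iUnion.mpr ⟨n, hn⟩)
    by_cases hvR : v ∈ R
    · exact ⟨hRB v hvR, Or.inl hvR⟩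
    · have hvB : v ∉ B := by
        intro hvB
        exact hnot 1 ⟨hvR, Or.inl hvB⟩
      have hstage : ∀ n, (T.children v ∩ qderN T B R n).ncard ≤ (T.children v ∩ P2 T B R).ncard := by
        intro n
        by_contra hlt
        push_neg at hlt
        apply hnot (n+1)
        refine ⟨hvR, Or.inr ?_⟩
        have e1 : T.children v \ (P2 T B R)ᶜ = T.children v ∩ P2 T B R := Set.diff_compl
        rw [e1]
        omega
      obtain ⟨N, hN⟩ := uniform_stage T (qderN T B R) (fun a b hab => qderN_mono T B R hab) v
      refine ⟨hvB, Or.inr ?_⟩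
      have e3 : T.children v \ C = T.children v ∩ (⋃ n, qderN T B R n) := by
        rw [hC, Set.diff_compl]
      have hsub : T.children v \ C ⊆ T.children v ∩ qderN T B R N := by
        rw [e3]
        intro c hc
        exact ⟨hc.1, hN ⟨hc.1, hc.2⟩⟩
      have hcard : (T.children v \ C).ncard ≤ (T.children v ∩ qderN T B R N).ncard :=
        Set.ncard_le_ncard hsub ((T.children_finite v).inter_of_left _)
      have := hstage N
      omega
  have hle := (P1op T B R (P2 T B R)).le_gfp hpre
  intro v hv
  by_contra hvC
  exact hv (hle hvC)

noncomputable def rhoq (T : RTree V) (B R : Set V) (v : V) : ℕ :=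
  if h : ∃ n, v ∈ qderN T B R n then Nat.find h else 0

lemma H2blue (T : RTree V) (B R : Set V) (hRB : ∀ v ∈ R, v ∉ B) :
    ∀ v ∈ (P1 T B R)ᶜ, v ∉ R ∧ (v ∈ B ∨ ∃ S, S ⊆ T.children v ∩ (P1 T B R)ᶜ ∧
      (∀ c ∈ S, rhoq T B R c < rhoq T B R v) ∧
      S.ncard = (T.children v \ (P2 T B R)ᶜ).ncard + 1) := by
  intro v hv
  have hex : ∃ n, v ∈ qderN T B R n := Set.mem_iUnion.mp (NP1_sub_iUnion T B R hRB hv)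
  have hrv : rhoq T B R v = Nat.find hex := by rw [rhoq, dif_pos hex]
  have hspec : v ∈ qderN T B R (Nat.find hex) := Nat.find_spec hex
  rcases hk : Nat.find hex with _ | k
  · rw [hk] at hspec
    exact absurd hspec (Set.notMem_empty v)
  · rw [hk] at hspec
    obtain ⟨hvR, hcond⟩ := hspec
    refine ⟨hvR, ?_⟩
    rcases hcond with hvB | hcond
    · exact Or.inl hvB
    · right
      have hsub0 : T.children v ∩ qderN T B R k ⊆ T.children v ∩ (P1 T B R)ᶜ :=
        Set.inter_subset_inter_right _ (qderN_le T B R k)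
      obtain ⟨S, hS1, hS2⟩ := Set.exists_subset_card_eq hcond
      refine ⟨S, hS1.trans hsub0, ?_, hS2⟩
      intro c hc
      have hc' : c ∈ qderN T B R k := (hS1 hc).2
      have hcex : ∃ n, c ∈ qderN T B R n := ⟨k, hc'⟩
      have : Nat.find hcex ≤ k := Nat.find_le hc'
      rw [rhoq, dif_pos hcex, hrv, hk]
      omega

lemma H1blue (T : RTree V) (B R : Set V) (hRB : ∀ v ∈ R, v ∉ B) :
    ∀ v ∈ (P2 T B R)ᶜ, v ∉ R ∧ (v ∈ B ∨
      (T.children v \ (P2 T B R)ᶜ).ncard ≤ (T.children v ∩ (P1 T B R)ᶜ).ncard) := by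
  intro v hv
  have hvR : v ∉ R := fun h => hv (R_sub_P2 T B R hRB h)
  refine ⟨hvR, ?_⟩
  have hnot : v ∉ phi T B R 1 (P2 T B R) (P1 T B R) := by
    rw [P2_eq]; exact hv
  by_cases hvB : v ∈ B
  · exact Or.inl hvB
  · right
    have hcond : ¬ ((T.children v \ P1 T B R).ncard + 1 ≤ (T.children v ∩ P2 T B R).ncard) := by
      intro h
      exact hnot ⟨hvB, Or.inr h⟩
    have e1 : T.children v \ (P2 T B R)ᶜ = T.children v ∩ P2 T B R := Set.diff_compl
    have e2 : T.children v ∩ (P1 T B R)ᶜ = T.children v \ P1 T B R := (Set.diff_eq _ _).symm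
    rw [e1, e2]
    omega

end RTree

/-- Main theorem: For a locally finite rooted tree with disjoint
sets `B` and `R` of leaves, either there is a strong blue blockage or there is
a red blockage. -/
theorem stmt11 {V : Type*} (T : RTree V) (B R : Set V)
    (hB : ∀ b ∈ B, T.IsLeaf b) (hR : ∀ r ∈ R, T.IsLeaf r)
    (hdisj : Disjoint B R) :
    (∃ X : Set V, T.StrongBlueBlockage B R X) ∨
    (∃ X : Set V, T.RedBlockage B R X) := by
  have hRB : ∀ v ∈ R, v ∉ B := fun v hv => Set.disjoint_right.mp hdisj hv
  by_cases hcase : (T.children T.root \ RTree.P1 T B R).ncard ≤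
      (T.children T.root ∩ RTree.P2 T B R).ncard
  · right
    have hroot : (T.children T.root \ RTree.P1 T B R).ncard + 0 ≤
        (T.children T.root ∩ RTree.P2 T B R).ncard := by omega
    obtain ⟨X, c1, c2, c3, c4, c5⟩ :=
      RTree.construct T B R (RTree.P1 T B R) (RTree.P2 T B R) (RTree.rho2 T B R) 0 hB hR
        (RTree.P2_sub_P1 T B R) (RTree.H2red T B R) (RTree.H1red T B R) hroot
    exact ⟨X, c1, c2, c3, c4⟩
  · left
    push_neg at hcase
    have hroot : (T.children T.root \ (RTree.P2 T B R)ᶜ).ncard + 1 ≤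
        (T.children T.root ∩ (RTree.P1 T B R)ᶜ).ncard := by
      have e1 : T.children T.root \ (RTree.P2 T B R)ᶜ =
          T.children T.root ∩ RTree.P2 T B R := Set.diff_compl
      have e2 : T.children T.root ∩ (RTree.P1 T B R)ᶜ =
          T.children T.root \ RTree.P1 T B R := (Set.diff_eq _ _).symm
      rw [e1, e2]
      omega
    obtain ⟨X, c1, c2, c3, c4, c5⟩ :=
      RTree.construct T R B ((RTree.P2 T B R)ᶜ) ((RTree.P1 T B R)ᶜ) (RTree.rhoq T B R) 1 hR hB
        (Set.compl_subset_compl.mpr (RTree.P2_sub_P1 T B R))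
        (RTree.H2blue T B R hRB) (RTree.H1blue T B R hRB) hroot
    refine ⟨X, ⟨c1, c2, c3, c4⟩, by exact_mod_cast c5⟩
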